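/- With $Q_n$ as in the recurrence $Q_{-1}=0$, $Q_0=1$, $Q_{n+1}(x)=(x-d_n)Q_n(x)-\lambda_n^2 Q_{n-1}(x)$, $d_0=1+\alpha$, $d_n = 2+\alpha/(n+1)$, $\lambda_n^2 = 1+\alpha/n$, the coefficient of $x^2$ in $Q_n$ satisfies $a_{2,n} = \frac{(n-1)n(n+1)}{24(\alpha+1)(\alpha+2)(\alpha+3)}\,[3(\alpha+2)n + 2(\alpha+6)]\; a_{0,n}$ for all $n \ge 0$, where $a_{0,n} = (-1)^n \prod_{k=1}^n(1+\alpha/k)$. -/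

import Mathlib

open Polynomial Finset

noncomputable def Acoef (α : ℝ) (n : ℕ) : ℝ :=
  (-1) ^ n * ∏ k ∈ Finset.Icc 1 n, (1 + α / k)

lemma Acoef_succ (α : ℝ) (n : ℕ) :
    Acoef α (n + 1) = -(1 + α / (n + 1)) * Acoef α n := by
  unfold Acoef
  rw [Finset.prod_Icc_succ_top (Nat.le_add_left 1 n)]
  push_cast
  ring

/-- With `Qₙ` defined by the three-term recurrence, the coefficient
of `x²` in `Qₙ` satisfies
`a_{2,n} = ((n-1)n(n+1)/(24(α+1)(α+2)(α+3))) [3(α+2)n + 2(α+6)] a_{0,n}`,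
where `a_{0,n} = (-1)ⁿ ∏_{k=1}^n (1 + α/k)`. -/
theorem stmt7 (α : ℝ) (hα : -1 < α) (Q : ℕ → Polynomial ℝ)
    (hQ0 : Q 0 = 1) (hQ1 : Q 1 = X - C (1 + α))
    (hrec : ∀ n : ℕ, 1 ≤ n →
      Q (n + 1) = (X - C (2 + α / (n + 1))) * Q n - C (1 + α / n) * Q (n - 1)) :
    ∀ n : ℕ, (Q n).coeff 2 =
      ((n - 1) * n * (n + 1) / (24 * (α + 1) * (α + 2) * (α + 3))) *
        (3 * (α + 2) * n + 2 * (α + 6)) *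
        ((-1) ^ n * ∏ k ∈ Finset.Icc 1 n, (1 + α / k)) := by
  have h1 : (α + 1) ≠ 0 := by linarith
  have h2 : (α + 2) ≠ 0 := by linarith
  have h3 : (α + 3) ≠ 0 := by linarith
  have cc : ∀ (d : ℝ) (P : ℝ[X]),
      ((X - C d) * P).coeff 0 = -(d * P.coeff 0) ∧
      ((X - C d) * P).coeff 1 = P.coeff 0 - d * P.coeff 1 ∧
      ((X - C d) * P).coeff 2 = P.coeff 1 - d * P.coeff 2 := by
    intro d P
    refine ⟨?_, ?_, ?_⟩
    · simp [sub_mul, Polynomial.mul_coeff_zero]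
    · rw [sub_mul, coeff_sub, show (1 : ℕ) = 0 + 1 from rfl, coeff_X_mul, coeff_C_mul]
    · rw [sub_mul, coeff_sub, show (2 : ℕ) = 1 + 1 from rfl, coeff_X_mul, coeff_C_mul]
  set c1 : ℕ → ℝ := fun n => -((n : ℝ) * (n + 1)) / (2 * (α + 1)) with hc1
  set c2 : ℕ → ℝ := fun n =>
    (((n : ℝ) - 1) * n * (n + 1) / (24 * (α + 1) * (α + 2) * (α + 3))) *
      (3 * (α + 2) * n + 2 * (α + 6)) with hc2
  have key : ∀ n : ℕ,
      ((Q n).coeff 0 = Acoef α n ∧ (Q n).coeff 1 = c1 n * Acoef α n ∧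
        (Q n).coeff 2 = c2 n * Acoef α n) ∧
      ((Q (n + 1)).coeff 0 = Acoef α (n + 1) ∧
        (Q (n + 1)).coeff 1 = c1 (n + 1) * Acoef α (n + 1) ∧
        (Q (n + 1)).coeff 2 = c2 (n + 1) * Acoef α (n + 1)) := by
    intro n
    induction n with
    | zero =>
      constructor
      · refine ⟨?_, ?_, ?_⟩ <;>
          simp [hQ0, Acoef, hc1, hc2, Polynomial.coeff_one]
      · have hA1 : Acoef α 1 = -(1 + α) := by
          simp [Acoef]
        refine ⟨?_, ?_, ?_⟩
        · simp [hQ1, hA1]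
        · rw [hQ1, coeff_sub, coeff_X_one, coeff_C, hA1]
          simp only [hc1]
          push_cast
          field_simp
          ring
        · rw [hQ1, coeff_sub, hA1]
          simp only [hc2, coeff_X, coeff_C]
          norm_num
    | succ n ih =>
      obtain ⟨⟨e0, e1, e2⟩, f0, f1, f2⟩ := ih
      refine ⟨⟨f0, f1, f2⟩, ?_, ?_, ?_⟩ <;>
      · have hr := hrec (n + 1) (Nat.le_add_left 1 n)
        simp only [Nat.add_sub_cancel] at hr
        have hn1 : ((n : ℝ) + 1) ≠ 0 := by positivity
        have hn2 : ((n : ℝ) + 2) ≠ 0 := by positivity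
        have hA1 := Acoef_succ α n
        have hA2 : Acoef α (n + 2) = ((1 + α / (n + 2)) * (1 + α / (n + 1))) * Acoef α n := by
          rw [show n + 2 = (n + 1) + 1 from rfl, Acoef_succ, Acoef_succ]
          push_cast
          ring
        rw [show n + 1 + 1 = n + 2 from rfl, hr, coeff_sub, coeff_C_mul]
        first
        | rw [(cc _ _).1]
        | rw [(cc _ _).2.1]
        | rw [(cc _ _).2.2]
        simp only [e0, e1, e2, f0, f1, f2, hA1, hA2, hc1, hc2]
        push_cast
        field_simp
        ring
  intro n
  exact (key n).1.2.2
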